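/- Let P be an abstract n-polytope whose automorphism group Γ(P) has exactly two orbits on flags. If for some rank i (0 ≤ i ≤ n-1) there exists a flag Φ such that Φ and its i-adjacent flag Φ^i lie in the same Γ(P)-orbit, then for every flag Ψ, the flags Ψ and Ψ^i lie in the same Γ(P)-orbit. -/

import Mathlib

/-- An abstract polytope of rank `n`, presented by a partially ordered type of faces
with a strictly monotone rank function onto `{-1, 0, ..., n}`, such that every flag
(maximal chain) has exactly one face of each rank (`faceAt`), every flag has a unique
`i`-adjacent flag for each `i = 0, ..., n-1` (the diamond condition, via `adj`), and
which is strongly flag-connected. -/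
structure AbstractPolytope (n : ℕ) (Face : Type*) [PartialOrder Face] where
  rank : Face → ℤ
  rank_strictMono : ∀ {F G : Face}, F < G → rank F < rank G
  rank_le : ∀ F : Face, -1 ≤ rank F ∧ rank F ≤ (n : ℤ)
  /-- the unique face of rank `i` in the flag `Φ`, for `-1 ≤ i ≤ n` -/
  faceAt : Flag Face → ℤ → Face
  faceAt_mem : ∀ (Φ : Flag Face) (i : ℤ), -1 ≤ i → i ≤ (n : ℤ) → faceAt Φ i ∈ Φ
  faceAt_rank : ∀ (Φ : Flag Face) (i : ℤ), -1 ≤ i → i ≤ (n : ℤ) → rank (faceAt Φ i) = i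
  faceAt_eq : ∀ (Φ : Flag Face) (F : Face), F ∈ Φ → faceAt Φ (rank F) = F
  /-- the unique `i`-adjacent flag of `Φ`, for `0 ≤ i ≤ n-1` -/
  adj : Flag Face → ℕ → Flag Face
  adj_ne : ∀ (Φ : Flag Face) (i : ℕ), i < n → adj Φ i ≠ Φ
  adj_mem : ∀ (Φ : Flag Face) (i : ℕ), i < n →
    ∀ F ∈ Φ, rank F ≠ (i : ℤ) → F ∈ adj Φ i
  adj_unique : ∀ (Φ Ψ : Flag Face) (i : ℕ), i < n → Ψ ≠ Φ →
    (∀ F ∈ Φ, rank F ≠ (i : ℤ) → F ∈ Ψ) → Ψ = adj Φ i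
  /-- strong flag-connectedness: any two flags are joined by a sequence of successively
  adjacent flags, with all adjacencies at ranks not occurring among their common faces -/
  connected : ∀ Φ Ψ : Flag Face, ∃ (l : ℕ) (c : ℕ → Flag Face), c 0 = Φ ∧ c l = Ψ ∧
    ∀ m < l, ∃ i : ℕ, i < n ∧ c (m + 1) = adj (c m) i ∧
      ∀ F : Face, F ∈ Φ → F ∈ Ψ → rank F ≠ (i : ℤ)

namespace AbstractPolytope

variable {n : ℕ} {Face : Type*} [PartialOrder Face]

/-- The automorphism group `Γ(P)`: order automorphisms of the set of faces.
It acts on flags via `Flag.map`; `g • Φ` denotes the image flag. -/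
instance : MulAction (Face ≃o Face) (Flag Face) where
  smul g Φ := Flag.map g Φ
  one_smul Φ := by
    show Flag.map 1 Φ = Φ
    ext x
    simp [Flag.map, Flag.ofIsMaxChain]
  mul_smul g h Φ := by
    show Flag.map (g * h) Φ = Flag.map g (Flag.map h Φ)
    ext x
    simp [Flag.map, Flag.ofIsMaxChain, Set.image_image]

lemma smul_flag_def (g : Face ≃o Face) (Φ : Flag Face) : g • Φ = Flag.map g Φ := rfl

/-- Two flags lie in the same orbit under the automorphism group. -/
def SameOrbit (Φ Ψ : Flag Face) : Prop := ∃ g : Face ≃o Face, g • Φ = Ψ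

/-- The polytope has exactly two orbits on flags. -/
def TwoOrbit (_A : AbstractPolytope n Face) : Prop :=
  ∃ Φ Ψ : Flag Face, ¬ SameOrbit Φ Ψ ∧ ∀ X : Flag Face, SameOrbit X Φ ∨ SameOrbit X Ψ

/-- `I` is the class type set of the two-orbit polytope `A`: it consists precisely of
those ranks `i ∈ {0,...,n-1}` such that every flag and its `i`-adjacent flag lie in the
same orbit; that is, `A` is in the class `2_I`. -/
def InClass (A : AbstractPolytope n Face) (I : Set ℕ) : Prop :=
  (∀ i ∈ I, i < n) ∧ ∀ i : ℕ, i < n → (i ∈ I ↔ ∀ Φ : Flag Face, SameOrbit Φ (A.adj Φ i))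

/-- The stabilizer in the automorphism group of a face `F`. -/
def faceStab (_A : AbstractPolytope n Face) (F : Face) : Subgroup (Face ≃o Face) where
  carrier := {g : Face ≃o Face | g F = F}
  one_mem' := rfl
  mul_mem' := by
    intro a b ha hb
    show (a * b) F = F
    rw [RelIso.mul_apply]
    rw [show b F = F from hb, show a F = F from ha]
  inv_mem' := by
    intro a ha
    show a⁻¹ F = F
    conv_lhs => rw [← show a F = F from ha]
    exact a.symm_apply_apply F

lemma mem_faceStab {A : AbstractPolytope n Face} {F : Face} {g : Face ≃o Face} :
    g ∈ A.faceStab F ↔ g F = F := Iff.rfl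

end AbstractPolytope


section Helpers

variable {n : ℕ} {Face : Type*} [PartialOrder Face]

open AbstractPolytope

namespace AbstractPolytope

lemma mem_smul_flag {g : Face ≃o Face} {Φ : Flag Face} {x : Face} :
    x ∈ g • Φ ↔ x ∈ g '' (Φ : Set Face) := by
  rw [smul_flag_def]
  exact Iff.of_eq (congrArg (x ∈ ·) (Flag.coe_map g Φ))

lemma exists_flag_mem (F : Face) : ∃ Φ : Flag Face, F ∈ Φ := by
  obtain ⟨M, hM, hsub⟩ := (Set.subsingleton_singleton (a := F)).isChain.exists_maxChain
  exact ⟨Flag.ofIsMaxChain M hM, hsub rfl⟩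

variable (A : AbstractPolytope n Face)

lemma faceAt_lt {Φ : Flag Face} {j k : ℤ} (h1 : -1 ≤ j) (hjk : j < k) (h2 : k ≤ (n:ℤ)) :
    A.faceAt Φ j < A.faceAt Φ k := by
  have hj : -1 ≤ j ∧ j ≤ (n:ℤ) := ⟨h1, le_trans hjk.le h2⟩
  have hk : -1 ≤ k ∧ k ≤ (n:ℤ) := ⟨le_trans h1 hjk.le, h2⟩
  have hmemj := A.faceAt_mem Φ j hj.1 hj.2
  have hmemk := A.faceAt_mem Φ k hk.1 hk.2
  rcases Φ.le_or_le hmemj hmemk with h | h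
  · rcases lt_or_eq_of_le h with h | h
    · exact h
    · exfalso
      have := congrArg A.rank h
      rw [A.faceAt_rank Φ j hj.1 hj.2, A.faceAt_rank Φ k hk.1 hk.2] at this
      omega
  · rcases lt_or_eq_of_le h with h | h
    · exfalso
      have := A.rank_strictMono h
      rw [A.faceAt_rank Φ j hj.1 hj.2, A.faceAt_rank Φ k hk.1 hk.2] at this
      omega
    · exfalso
      have := congrArg A.rank h
      rw [A.faceAt_rank Φ j hj.1 hj.2, A.faceAt_rank Φ k hk.1 hk.2] at this
      omega

/-- Automorphisms preserve rank. -/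
lemma rank_smul (g : Face ≃o Face) (F : Face) : A.rank (g F) = A.rank F := by
  obtain ⟨Φ, hF⟩ := exists_flag_mem F
  set f : ℤ → ℤ := fun j => A.rank (g (A.faceAt Φ j)) with hf
  have hmono : ∀ j k : ℤ, -1 ≤ j → j < k → k ≤ (n:ℤ) → f j < f k := by
    intro j k h1 hjk h2
    exact A.rank_strictMono (g.strictMono (A.faceAt_lt h1 hjk h2))
  have hrange : ∀ j : ℤ, -1 ≤ j → j ≤ (n:ℤ) → -1 ≤ f j ∧ f j ≤ (n:ℤ) := fun j _ _ =>
    A.rank_le _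
  have hlow : ∀ j : ℤ, -1 ≤ j → j ≤ (n:ℤ) → j ≤ f j := by
    intro j h1
    exact Int.le_induction (motive := fun j _ => j ≤ (n:ℤ) → j ≤ f j)
      (fun _ => (hrange _ le_rfl (by omega)).1)
      (fun k hk ih h2 => by
        have := hmono k (k+1) hk (by omega) h2
        have := ih (by omega)
        omega) j h1
  have hhigh : ∀ j : ℤ, -1 ≤ j → j ≤ (n:ℤ) → f j ≤ j := by
    intro j h1 h2
    exact Int.le_induction_down (motive := fun j _ => -1 ≤ j → f j ≤ j)
      (fun _ => (hrange _ (by omega) le_rfl).2)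
      (fun k hk ih h1' => by
        have := hmono (k-1) k (by omega) (by omega) hk
        have := ih (by omega)
        omega) j h2 h1
  have hfix : ∀ j : ℤ, -1 ≤ j → j ≤ (n:ℤ) → f j = j := fun j h1 h2 =>
    le_antisymm (hhigh j h1 h2) (hlow j h1 h2)
  have hr := A.rank_le F
  have key := hfix (A.rank F) hr.1 hr.2
  rw [hf] at key
  simp only at key
  rwa [A.faceAt_eq Φ F hF] at key

/-- Automorphisms commute with taking the `i`-adjacent flag. -/
lemma smul_adj (g : Face ≃o Face) (Φ : Flag Face) (i : ℕ) (hi : i < n) :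
    g • A.adj Φ i = A.adj (g • Φ) i := by
  apply A.adj_unique
  · exact hi
  · intro h
    have : A.adj Φ i = Φ := by
      have := congrArg (fun X => g⁻¹ • X) h
      simpa [smul_smul] using this
    exact A.adj_ne Φ i hi this
  · intro F hF hrk
    rw [mem_smul_flag] at hF
    obtain ⟨F', hF', rfl⟩ := hF
    rw [A.rank_smul] at hrk
    rw [mem_smul_flag]
    exact ⟨F', A.adj_mem Φ i hi F' hF' hrk, rfl⟩

lemma adj_adj (Φ : Flag Face) (i : ℕ) (hi : i < n) : A.adj (A.adj Φ i) i = Φ := by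
  symm
  apply A.adj_unique
  · exact hi
  · exact (A.adj_ne Φ i hi).symm
  · intro F hF hrk
    have hrF := A.rank_le F
    have h1 : A.faceAt Φ (A.rank F) ∈ A.adj Φ i := by
      apply A.adj_mem Φ i hi _ (A.faceAt_mem Φ _ hrF.1 hrF.2)
      rw [A.faceAt_rank Φ _ hrF.1 hrF.2]; exact hrk
    have h2 : A.faceAt (A.adj Φ i) (A.rank F) = F := A.faceAt_eq _ F hF
    have h3 : A.faceAt (A.adj Φ i) (A.rank (A.faceAt Φ (A.rank F))) = A.faceAt Φ (A.rank F) :=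
      A.faceAt_eq _ _ h1
    rw [A.faceAt_rank Φ _ hrF.1 hrF.2] at h3
    rw [← h2, h3]
    exact A.faceAt_mem Φ _ hrF.1 hrF.2

lemma sameOrbit_refl (Φ : Flag Face) : SameOrbit Φ Φ := ⟨1, one_smul _ _⟩

lemma sameOrbit_symm {Φ Ψ : Flag Face} (h : SameOrbit Φ Ψ) : SameOrbit Ψ Φ := by
  obtain ⟨g, rfl⟩ := h
  exact ⟨g⁻¹, by simp [smul_smul]⟩

lemma sameOrbit_trans {Φ Ψ X : Flag Face} (h1 : SameOrbit Φ Ψ) (h2 : SameOrbit Ψ X) :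
    SameOrbit Φ X := by
  obtain ⟨g, rfl⟩ := h1
  obtain ⟨h, rfl⟩ := h2
  exact ⟨h * g, (mul_smul h g Φ)⟩

end AbstractPolytope

end Helpers

open AbstractPolytope in
/-- In a two-orbit polytope, whether a flag and its `i`-adjacent flag lie in
the same orbit is independent of the flag. -/
theorem stmt0 {n : ℕ} {Face : Type*} [PartialOrder Face] (A : AbstractPolytope n Face)
    (h2 : A.TwoOrbit) (i : ℕ) (hi : i < n) (Φ : Flag Face)
    (hΦ : SameOrbit Φ (A.adj Φ i)) :
    ∀ Ψ : Flag Face, SameOrbit Ψ (A.adj Ψ i) := by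
  intro Ψ
  -- if Ψ is in the same orbit as Φ, done
  by_cases hcase : SameOrbit Φ Ψ
  · obtain ⟨g, rfl⟩ := hcase
    rw [← A.smul_adj g Φ i hi]
    obtain ⟨h, hh⟩ := hΦ
    refine ⟨g * h * g⁻¹, ?_⟩
    rw [mul_smul, mul_smul, inv_smul_smul, hh]
  · -- otherwise show ¬ SameOrbit Φ (A.adj Ψ i), then use two orbits
    have hkey : ¬ SameOrbit (A.adj Ψ i) Φ := by
      intro hcon
      apply hcase
      obtain ⟨g, hg⟩ := hcon
      have : g • Ψ = A.adj Φ i := by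
        rw [← hg, ← A.smul_adj g (A.adj Ψ i) i hi, A.adj_adj Ψ i hi]
      exact sameOrbit_trans hΦ (sameOrbit_symm ⟨g, this⟩)
    obtain ⟨X, Y, hXY, hall⟩ := h2
    -- Φ is in orbit of X or Y; wlog via cases
    rcases hall Φ with hΦX | hΦY
    · rcases hall Ψ with hΨ | hΨ
      · exact absurd (sameOrbit_trans hΦX (sameOrbit_symm hΨ)) hcase
      · rcases hall (A.adj Ψ i) with hA | hA
        · exact absurd (sameOrbit_trans hA (sameOrbit_symm hΦX)) hkey
        · exact sameOrbit_trans hΨ (sameOrbit_symm hA)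
    · rcases hall Ψ with hΨ | hΨ
      · rcases hall (A.adj Ψ i) with hA | hA
        · exact sameOrbit_trans hΨ (sameOrbit_symm hA)
        · exact absurd (sameOrbit_trans hA (sameOrbit_symm hΦY)) hkey
      · exact absurd (sameOrbit_trans hΦY (sameOrbit_symm hΨ)) hcase
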